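/- Let Γ be a finitely generated group containing a finite-index subgroup Γ' such that every representation Γ' → GL(r, ℂ) is rigid. Then every representation Γ → GL(r, ℂ) is rigid. -/

import Mathlib

/-- The representation of `G` on `ℂⁿ` associated to a homomorphism `G →* GL(n, ℂ)`. -/
noncomputable def matRep {G : Type*} [Group G] {n : ℕ} (ρ : G →* GL (Fin n) ℂ) :
    Representation ℂ G (Fin n → ℂ) where
  toFun g := Matrix.toLin' (ρ g : Matrix (Fin n) (Fin n) ℂ)
  map_one' := by simp; rfl
  map_mul' g₁ g₂ := by
    simp [map_mul, Matrix.toLin'_mul, Module.End.mul_eq_comp]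

/-- A representation `G →* GL(n, ℂ)` is semisimple if the associated
`ℂ[G]`-module is semisimple. -/
def IsSemisimpleRep {G : Type*} [Group G] {n : ℕ} (ρ : G →* GL (Fin n) ℂ) : Prop :=
  IsSemisimpleModule (MonoidAlgebra ℂ G) (Representation.asModule (matRep ρ))

/-- Two representations into `GL(n, ℂ)` are isomorphic iff they are conjugate by an
element of `GL(n, ℂ)`. -/
def RepIso {G : Type*} [Group G] {n : ℕ} (ρ₁ ρ₂ : G →* GL (Fin n) ℂ) : Prop :=
  ∃ M : GL (Fin n) ℂ, ∀ g : G, ρ₂ g = M * ρ₁ g * M⁻¹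

/-- `Rigid G r` : every representation `G → GL(r, ℂ)` of the finitely generated
group `G` is rigid; equivalently (and this is how we phrase it), `G` has only
finitely many conjugacy classes of semisimple representations into `GL(r, ℂ)`. -/
def Rigid (G : Type*) [Group G] (r : ℕ) : Prop :=
  ∃ l : List (G →* GL (Fin r) ℂ),
    ∀ ρ : G →* GL (Fin r) ℂ, IsSemisimpleRep ρ → ∃ ρ' ∈ l, RepIso ρ ρ'



open Module

namespace RigidAux

variable {G : Type*} [Group G] {W W₂ : Type*} [AddCommGroup W] [Module ℂ W]
  [AddCommGroup W₂] [Module ℂ W₂]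

section basic
variable (σ : Representation ℂ G W) (σ₂ : Representation ℂ G W₂)

lemma smul_asModule (r : MonoidAlgebra ℂ G) (x : σ.asModule) :
    r • x = σ.asAlgebraHom r x := rfl

lemma single_smul (g : G) (c : ℂ) (x : σ.asModule) :
    (MonoidAlgebra.single g c : MonoidAlgebra ℂ G) • x = c • σ g x := by
  rw [smul_asModule, Representation.asAlgebraHom_single]
  rfl

lemma of_smul (g : G) (x : σ.asModule) :
    (MonoidAlgebra.of ℂ G g) • x = σ g x := by
  have : (MonoidAlgebra.of ℂ G g : MonoidAlgebra ℂ G) = MonoidAlgebra.single g 1 := rfl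
  rw [this, single_smul, one_smul]

instance : IsScalarTower ℂ (MonoidAlgebra ℂ G) σ.asModule :=
  ⟨fun c r x => by
    show σ.asAlgebraHom (c • r) x = c • σ.asAlgebraHom r x
    rw [map_smul]; rfl⟩

/-- An invariant ℂ-submodule gives a `MonoidAlgebra` submodule. -/
def mkSub (p : Submodule ℂ W) (hp : ∀ g : G, ∀ x ∈ p, σ g x ∈ p) :
    Submodule (MonoidAlgebra ℂ G) σ.asModule where
  carrier := (p : Set W)
  add_mem' := p.add_mem
  zero_mem' := p.zero_mem
  smul_mem' := by
    intro r x hx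
    induction r using MonoidAlgebra.induction_linear with
    | zero => rw [zero_smul]; exact p.zero_mem
    | add f g hf hg => rw [add_smul]; exact p.add_mem hf hg
    | single g c =>
        rw [single_smul]
        exact p.smul_mem c (hp g x hx)

@[simp] lemma mem_mkSub {p : Submodule ℂ W} {hp} {x : W} :
    x ∈ mkSub σ p hp ↔ x ∈ p := Iff.rfl

lemma apply_mem (P : Submodule (MonoidAlgebra ℂ G) σ.asModule) (g : G) {x : σ.asModule}
    (hx : x ∈ P) : σ g x ∈ P := by
  rw [← of_smul]; exact P.smul_mem _ hx

/-- An equivariant ℂ-linear map gives a `MonoidAlgebra`-linear map. -/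
def mkMap (f : W →ₗ[ℂ] W₂) (hf : ∀ (g : G) (x : W), f (σ g x) = σ₂ g (f x)) :
    σ.asModule →ₗ[MonoidAlgebra ℂ G] σ₂.asModule where
  toFun := f
  map_add' := f.map_add
  map_smul' := by
    intro r x
    simp only [RingHom.id_apply]
    induction r using MonoidAlgebra.induction_linear with
    | zero => exact (congrArg f (zero_smul (MonoidAlgebra ℂ G) x)).trans (f.map_zero.trans (zero_smul (MonoidAlgebra ℂ G) (show σ₂.asModule from f x)).symm)
    | add a b ha hb => exact (congrArg f (add_smul a b x)).trans ((f.map_add _ _).trans ((congrArg₂ (· + ·) ha hb).trans (add_smul a b (show σ₂.asModule from f x)).symm))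
    | single g c => exact (congrArg f (single_smul σ g c x)).trans ((f.map_smul c _).trans ((congrArg (c • ·) (hf g x)).trans (single_smul σ₂ g c (f x : σ₂.asModule)).symm))

@[simp] lemma mkMap_apply (f : W →ₗ[ℂ] W₂) (hf) (x : σ.asModule) :
    mkMap σ σ₂ f hf x = f x := rfl

/-- An equivariant ℂ-linear equiv gives a `MonoidAlgebra`-linear equiv. -/
noncomputable def mkEquiv (f : W ≃ₗ[ℂ] W₂) (hf : ∀ (g : G) (x : W), f (σ g x) = σ₂ g (f x)) :
    σ.asModule ≃ₗ[MonoidAlgebra ℂ G] σ₂.asModule :=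
  LinearEquiv.ofLinear (mkMap σ σ₂ f.toLinearMap hf)
    (mkMap σ₂ σ f.symm.toLinearMap (by
      intro g x
      apply f.injective
      rw [hf]
      simp))
    (by ext x; exact f.apply_symm_apply x)
    (by ext x; exact f.symm_apply_apply x)

@[simp] lemma mkEquiv_apply (f : W ≃ₗ[ℂ] W₂) (hf) (x : σ.asModule) :
    mkEquiv σ σ₂ f hf x = f x := rfl

end basic

end RigidAux


namespace RigidAux

variable {G : Type*} [Group G] {n : ℕ}

lemma matRep_apply (ρ : G →* GL (Fin n) ℂ) (g : G) (x : Fin n → ℂ) :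
    matRep ρ g x = (ρ g : Matrix (Fin n) (Fin n) ℂ).mulVec x := Matrix.toLin'_apply _ _

/-- matrices are equal if they define the same mulVec action -/
lemma matrix_eq_of_mulVec {A B : Matrix (Fin n) (Fin n) ℂ}
    (h : ∀ v, A.mulVec v = B.mulVec v) : A = B := by
  have : Matrix.toLin' A = Matrix.toLin' B := by
    apply LinearMap.ext; intro v; rw [Matrix.toLin'_apply, Matrix.toLin'_apply, h]
  exact Matrix.toLin'.injective this

/-- A `MonoidAlgebra`-linear equivalence of associated modules yields conjugacy. -/
lemma repIso_of_equiv {ρ₁ ρ₂ : G →* GL (Fin n) ℂ}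
    (e : (matRep ρ₁).asModule ≃ₗ[MonoidAlgebra ℂ G] (matRep ρ₂).asModule) :
    ∃ M : GL (Fin n) ℂ, ∀ g : G, ρ₂ g = M * ρ₁ g * M⁻¹ := by
  have hcomm : ∀ (g : G) (x : Fin n → ℂ),
      e (matRep ρ₁ g x) = matRep ρ₂ g (e x) := by
    intro g x
    have := e.map_smul (MonoidAlgebra.of ℂ G g) x
    exact (congrArg e (of_smul (matRep ρ₁) g x).symm).trans (this.trans (of_smul (matRep ρ₂) g (e x)))
  let f0 : (matRep ρ₁).asModule ≃ₗ[ℂ] (matRep ρ₂).asModule := e.restrictScalars ℂ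
  let f : (Fin n → ℂ) →ₗ[ℂ] (Fin n → ℂ) := (f0.toLinearMap : (Fin n → ℂ) →ₗ[ℂ] (Fin n → ℂ))
  let finv : (Fin n → ℂ) →ₗ[ℂ] (Fin n → ℂ) := (f0.symm.toLinearMap : (Fin n → ℂ) →ₗ[ℂ] (Fin n → ℂ))
  have hf : ∀ x : Fin n → ℂ, f x = e x := fun _ => rfl
  have hfinv : ∀ x : Fin n → ℂ, finv x = e.symm x := fun _ => rfl
  refine ⟨⟨LinearMap.toMatrix' f, LinearMap.toMatrix' finv, ?_, ?_⟩, ?_⟩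
  · rw [← LinearMap.toMatrix'_comp, ← LinearMap.toMatrix'_id]
    congr 1; apply LinearMap.ext; intro x
    show f (finv x) = x
    exact e.apply_symm_apply x
  · rw [← LinearMap.toMatrix'_comp, ← LinearMap.toMatrix'_id]
    congr 1; apply LinearMap.ext; intro x
    show finv (f x) = x
    exact e.symm_apply_apply x
  · intro g
    rw [eq_mul_inv_iff_mul_eq]
    apply Units.ext
    show (ρ₂ g : Matrix (Fin n) (Fin n) ℂ) * _ = _ * (ρ₁ g : Matrix (Fin n) (Fin n) ℂ)
    apply matrix_eq_of_mulVec
    intro v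
    rw [← Matrix.mulVec_mulVec, ← Matrix.mulVec_mulVec]
    have h1 : (LinearMap.toMatrix' f).mulVec v = f v := by
      rw [← Matrix.toLin'_apply, Matrix.toLin'_toMatrix']
    have h2 : (LinearMap.toMatrix' f).mulVec ((ρ₁ g : Matrix (Fin n) (Fin n) ℂ).mulVec v)
        = f ((ρ₁ g : Matrix (Fin n) (Fin n) ℂ).mulVec v) := by
      rw [← Matrix.toLin'_apply, Matrix.toLin'_toMatrix']
    rw [h1, h2, hf, hf]
    have := hcomm g v
    exact (this.trans (matRep_apply ρ₂ g (e v))).symm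

/-- Conjugacy yields a `MonoidAlgebra`-linear equivalence. -/
lemma equiv_of_repIso {ρ₁ ρ₂ : G →* GL (Fin n) ℂ} (M : GL (Fin n) ℂ)
    (hM : ∀ g : G, ρ₂ g = M * ρ₁ g * M⁻¹) :
    Nonempty ((matRep ρ₁).asModule ≃ₗ[MonoidAlgebra ℂ G] (matRep ρ₂).asModule) := by
  have hMM : ((M : Matrix (Fin n) (Fin n) ℂ) * ((M⁻¹ : GL (Fin n) ℂ) : Matrix (Fin n) (Fin n) ℂ)) = 1 := by
    exact M.mul_inv
  have hMM' : (((M⁻¹ : GL (Fin n) ℂ) : Matrix (Fin n) (Fin n) ℂ) * (M : Matrix (Fin n) (Fin n) ℂ)) = 1 := by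
    exact M.inv_mul
  let f : (Fin n → ℂ) ≃ₗ[ℂ] (Fin n → ℂ) :=
    LinearEquiv.ofLinear (Matrix.toLin' (M : Matrix (Fin n) (Fin n) ℂ))
      (Matrix.toLin' ((M⁻¹ : GL (Fin n) ℂ) : Matrix (Fin n) (Fin n) ℂ))
      (by rw [← Matrix.toLin'_mul, hMM, Matrix.toLin'_one])
      (by rw [← Matrix.toLin'_mul, hMM', Matrix.toLin'_one])
  refine ⟨mkEquiv _ _ f ?_⟩
  intro g x
  show Matrix.toLin' (M : Matrix (Fin n) (Fin n) ℂ) (matRep ρ₁ g x)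
      = matRep ρ₂ g (Matrix.toLin' (M : Matrix (Fin n) (Fin n) ℂ) x)
  have h3 : ρ₂ g * M = M * ρ₁ g := by rw [hM g]; group
  have h2 := congrArg Units.val h3
  simp only [Units.val_mul] at h2
  rw [matRep_apply, matRep_apply, Matrix.toLin'_apply, Matrix.toLin'_apply,
    Matrix.mulVec_mulVec, Matrix.mulVec_mulVec, h2]

end RigidAux

-- part 3: from modules back to representations
namespace RigidAux

open Module

variable {G : Type*} [Group G]

section ofmod
variable (W : Type*) [AddCommGroup W] [Module ℂ W] [Module (MonoidAlgebra ℂ G) W]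
  [IsScalarTower ℂ (MonoidAlgebra ℂ G) W]

/-- The representation of `G` on an abstract `MonoidAlgebra ℂ G`-module. -/
noncomputable def ofModuleRep : Representation ℂ G W where
  toFun g :=
    { toFun := fun x => (MonoidAlgebra.of ℂ G g : MonoidAlgebra ℂ G) • x
      map_add' := fun x y => smul_add _ x y
      map_smul' := fun c x => by
        simp only [RingHom.id_apply]
        rw [smul_comm] }
  map_one' := by
    ext x
    simp only [LinearMap.coe_mk, AddHom.coe_mk, Module.End.one_apply, map_one]
    show (MonoidAlgebra.single 1 1 : MonoidAlgebra ℂ G) • x = x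
    rw [← MonoidAlgebra.one_def, one_smul]
  map_mul' g₁ g₂ := by
    ext x
    simp only [LinearMap.coe_mk, AddHom.coe_mk, Module.End.mul_apply]
    rw [← mul_smul, ← map_mul]

lemma ofModuleRep_apply (g : G) (x : W) :
    ofModuleRep W g x = (MonoidAlgebra.of ℂ G g : MonoidAlgebra ℂ G) • x := rfl

lemma single_eq_mul_of (g : G) (c : ℂ) :
    (MonoidAlgebra.single g c : MonoidAlgebra ℂ G)
      = algebraMap ℂ (MonoidAlgebra ℂ G) c * MonoidAlgebra.of ℂ G g := by
  have : (algebraMap ℂ (MonoidAlgebra ℂ G) c) = MonoidAlgebra.single 1 c := rfl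
  rw [this]
  show _ = MonoidAlgebra.single 1 c * MonoidAlgebra.single g 1
  rw [MonoidAlgebra.single_mul_single, one_mul, mul_one]

lemma ofModuleRep_asAlgebraHom (r : MonoidAlgebra ℂ G) (x : W) :
    (ofModuleRep W).asAlgebraHom r x = r • x := by
  induction r using MonoidAlgebra.induction_linear with
  | zero => rw [map_zero, zero_smul]; rfl
  | add a b ha hb => rw [map_add, add_smul, LinearMap.add_apply, ha, hb]
  | single g c =>
      rw [Representation.asAlgebraHom_single]
      show c • (ofModuleRep W g x) = _
      rw [ofModuleRep_apply]
      show c • ((MonoidAlgebra.of ℂ G g : MonoidAlgebra ℂ G) • x)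
        = (MonoidAlgebra.single g c : MonoidAlgebra ℂ G) • x
      rw [single_eq_mul_of, mul_smul, algebraMap_smul]

/-- The identity as a `MonoidAlgebra`-linear equivalence between
`(ofModuleRep W).asModule` and `W`. -/
noncomputable def ofModuleRepEquiv : (ofModuleRep (G := G) W).asModule ≃ₗ[MonoidAlgebra ℂ G] W where
  toFun x := x
  invFun x := x
  left_inv _ := rfl
  right_inv _ := rfl
  map_add' _ _ := rfl
  map_smul' r x := ofModuleRep_asAlgebraHom W r x

/-- Every finite-dimensional `MonoidAlgebra ℂ G`-module comes from a matrix
representation. -/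
lemma exists_rep [FiniteDimensional ℂ W] {m : ℕ} (hm : finrank ℂ W = m) :
    ∃ ρ : G →* GL (Fin m) ℂ,
      Nonempty ((matRep ρ).asModule ≃ₗ[MonoidAlgebra ℂ G] W) := by
  classical
  let b : Basis (Fin m) ℂ W := Module.finBasisOfFinrankEq ℂ W hm
  let e0 : (Fin m → ℂ) ≃ₗ[ℂ] W := b.equivFun.symm
  let L : G → ((Fin m → ℂ) →ₗ[ℂ] (Fin m → ℂ)) := fun g =>
    (e0.symm.toLinearMap.comp ((ofModuleRep W g).comp e0.toLinearMap))
  have hLmul : ∀ g₁ g₂, L (g₁ * g₂) = (L g₁).comp (L g₂) := by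
    intro g₁ g₂
    apply LinearMap.ext; intro x
    simp only [L, LinearMap.comp_apply, LinearEquiv.coe_coe, e0.apply_symm_apply]
    rw [map_mul]
    rfl
  have hLone : L 1 = LinearMap.id := by
    apply LinearMap.ext; intro x
    simp [L]
  let A : G → Matrix (Fin m) (Fin m) ℂ := fun g => LinearMap.toMatrix' (L g)
  have hA : ∀ g₁ g₂, A (g₁ * g₂) = A g₁ * A g₂ := by
    intro g₁ g₂
    rw [← LinearMap.toMatrix'_comp, ← hLmul]
  have hA1 : A 1 = 1 := by
    show LinearMap.toMatrix' (L 1) = 1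
    rw [hLone, LinearMap.toMatrix'_id]
  let ρ : G →* GL (Fin m) ℂ :=
    { toFun := fun g => ⟨A g, A g⁻¹, by rw [← hA, mul_inv_cancel, hA1], by rw [← hA, inv_mul_cancel, hA1]⟩
      map_one' := by apply Units.ext; exact hA1
      map_mul' := fun g₁ g₂ => by apply Units.ext; exact hA g₁ g₂ }
  have hmat : ∀ (g : G) (x : Fin m → ℂ), matRep ρ g x = L g x := by
    intro g x
    rw [matRep_apply]
    show (LinearMap.toMatrix' (L g)).mulVec x = _
    rw [← Matrix.toLin'_apply, Matrix.toLin'_toMatrix']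
  refine ⟨ρ, ⟨(mkEquiv (matRep ρ) (ofModuleRep W) e0 ?_).trans (ofModuleRepEquiv W)⟩⟩
  intro g x
  rw [hmat]
  simp only [L, LinearMap.comp_apply, LinearEquiv.coe_coe, e0.apply_symm_apply]

end ofmod

section simpleexists

variable {R : Type*} [Ring R] [Algebra ℂ R] {M : Type*} [AddCommGroup M] [Module ℂ M]
  [Module R M] [IsScalarTower ℂ R M] [FiniteDimensional ℂ M]

/-- Every nonzero submodule of a finite-dimensional module contains a simple
submodule. -/
lemma exists_simple_le (W : Submodule R M) (hW : W ≠ ⊥) :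
    ∃ s : Submodule R M, s ≤ W ∧ IsSimpleModule R s := by
  classical
  let S : Set ℕ := {k | ∃ s : Submodule R M, s ≤ W ∧ s ≠ ⊥ ∧
    finrank ℂ (s.restrictScalars ℂ) = k}
  have hS : S.Nonempty := ⟨finrank ℂ (W.restrictScalars ℂ), W, le_rfl, hW, rfl⟩
  obtain ⟨s, hsW, hs0, hsrank⟩ := Nat.sInf_mem hS
  refine ⟨s, hsW, ?_⟩
  rw [isSimpleModule_iff_isAtom]
  constructor
  · exact hs0
  · intro b hb
    by_contra hb0
    have hlt : (b.restrictScalars ℂ) < (s.restrictScalars ℂ) := by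
      constructor
      · intro x hx; exact hb.le hx
      · intro hle
        apply hb.ne
        apply le_antisymm hb.le
        intro x hx
        exact hle hx
    have := Submodule.finrank_lt_finrank_of_lt hlt
    have hmem : finrank ℂ (b.restrictScalars ℂ) ∈ S := ⟨b, le_trans hb.le hsW, hb0, rfl⟩
    have := Nat.sInf_le hmem
    omega

end simpleexists

end RigidAux

-- part 4: coinduced representation
namespace RigidAux

open Module

variable {Γ : Type*} [Group Γ] (H : Subgroup Γ) {n : ℕ} (σ : ↥H →* GL (Fin n) ℂ)

/-- The carrier of the coinduced representation. -/
noncomputable def coindCarrier : Submodule ℂ (Γ → (Fin n → ℂ)) where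
  carrier := {f | ∀ (g : Γ) (h : ↥H),
    f (g * h) = ((σ h⁻¹ : GL (Fin n) ℂ) : Matrix (Fin n) (Fin n) ℂ).mulVec (f g)}
  add_mem' := by
    intro a b ha hb g h
    simp only [Pi.add_apply, ha g h, hb g h, Matrix.mulVec_add]
  zero_mem' := by
    intro g h
    simp only [Pi.zero_apply, Matrix.mulVec_zero]
  smul_mem' := by
    intro c a ha g h
    simp only [Pi.smul_apply, ha g h, Matrix.mulVec_smul]

lemma mem_coindCarrier {f : Γ → (Fin n → ℂ)} :
    f ∈ coindCarrier H σ ↔ ∀ (g : Γ) (h : ↥H),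
      f (g * h) = ((σ h⁻¹ : GL (Fin n) ℂ) : Matrix (Fin n) (Fin n) ℂ).mulVec (f g) :=
  Iff.rfl

/-- The coinduced representation of `Γ`. -/
noncomputable def coindRep : Representation ℂ Γ ↥(coindCarrier H σ) where
  toFun g₀ :=
    { toFun := fun f => ⟨fun x => f.1 (g₀⁻¹ * x), by
        intro g h
        show f.1 (g₀⁻¹ * (g * ↑h)) = _
        rw [← mul_assoc]
        exact f.2 (g₀⁻¹ * g) h⟩
      map_add' := fun a b => Subtype.ext (funext fun x => rfl)
      map_smul' := fun c a => Subtype.ext (funext fun x => rfl) }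
  map_one' := by
    apply LinearMap.ext; intro f
    apply Subtype.ext; funext x
    simp
  map_mul' g₁ g₂ := by
    apply LinearMap.ext; intro f
    apply Subtype.ext; funext x
    show f.1 ((g₁ * g₂)⁻¹ * x) = f.1 (g₂⁻¹ * (g₁⁻¹ * x))
    rw [mul_inv_rev, mul_assoc]

lemma coind_finiteDimensional [H.FiniteIndex] :
    FiniteDimensional ℂ ↥(coindCarrier H σ) := by
  classical
  have hfin : Finite (Γ ⧸ H) := inferInstance
  haveI := Fintype.ofFinite (Γ ⧸ H)
  let E : ↥(coindCarrier H σ) →ₗ[ℂ] ((Γ ⧸ H) → (Fin n → ℂ)) :=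
    { toFun := fun f q => f.1 q.out
      map_add' := fun a b => funext fun q => rfl
      map_smul' := fun c a => funext fun q => rfl }
  apply FiniteDimensional.of_injective E
  intro a b hab
  apply Subtype.ext; funext g
  have key : ∀ q : Γ ⧸ H, a.1 q.out = b.1 q.out := fun q => congrFun hab q
  set q : Γ ⧸ H := QuotientGroup.mk g with hq
  have hout : QuotientGroup.mk q.out = q := q.out_eq
  have hmem : q.out⁻¹ * g ∈ H := by
    rw [← QuotientGroup.eq]
    rw [hout]
  have hg : q.out * ((⟨q.out⁻¹ * g, hmem⟩ : ↥H) : Γ) = g := by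
    show q.out * (q.out⁻¹ * g) = g
    rw [← mul_assoc, mul_inv_cancel, one_mul]
  calc a.1 g = a.1 (q.out * ((⟨q.out⁻¹ * g, hmem⟩ : ↥H) : Γ)) := by rw [hg]
    _ = b.1 (q.out * ((⟨q.out⁻¹ * g, hmem⟩ : ↥H) : Γ)) := by
          rw [a.2 q.out, key, ← b.2 q.out]
    _ = b.1 g := by rw [hg]

variable {H σ} in
/-- The unit map `V → Coind(res ρ̃)`, as an equivariant map. -/
lemma exists_unit (ρt : Γ →* GL (Fin n) ℂ) (hres : ∀ h : ↥H, ρt h = σ h) :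
    ∃ u : (matRep ρt).asModule →ₗ[MonoidAlgebra ℂ Γ] (coindRep H σ).asModule,
      Function.Injective u := by
  have hmem : ∀ v : Fin n → ℂ, (fun x : Γ => ((ρt x⁻¹ : GL (Fin n) ℂ) :
      Matrix (Fin n) (Fin n) ℂ).mulVec v) ∈ coindCarrier H σ := by
    intro v g h
    have h1 : ρt (g * ↑h)⁻¹ = ρt ((↑h)⁻¹) * ρt g⁻¹ := by
      rw [mul_inv_rev, map_mul]
    have h2 : ρt ((↑h : Γ)⁻¹) = σ h⁻¹ := by
      have := hres h⁻¹
      rwa [show ((h⁻¹ : ↥H) : Γ) = ((h : Γ))⁻¹ from rfl] at this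
    show ((ρt (g * ↑h)⁻¹ : GL (Fin n) ℂ) : Matrix (Fin n) (Fin n) ℂ).mulVec v = _
    rw [h1, h2, Units.val_mul, ← Matrix.mulVec_mulVec]
  let u0 : (Fin n → ℂ) →ₗ[ℂ] ↥(coindCarrier H σ) :=
    { toFun := fun v => ⟨_, hmem v⟩
      map_add' := fun x y => Subtype.ext (funext fun g => by
        simp [Matrix.mulVec_add])
      map_smul' := fun c x => Subtype.ext (funext fun g => by
        simp [Matrix.mulVec_smul]) }
  have hcomm : ∀ (g : Γ) (x : Fin n → ℂ),
      u0 (matRep ρt g x) = coindRep H σ g (u0 x) := by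
    intro g x
    apply Subtype.ext; funext y
    show ((ρt y⁻¹ : GL (Fin n) ℂ) : Matrix (Fin n) (Fin n) ℂ).mulVec (matRep ρt g x)
      = ((ρt (g⁻¹ * y)⁻¹ : GL (Fin n) ℂ) : Matrix (Fin n) (Fin n) ℂ).mulVec x
    rw [matRep_apply, Matrix.mulVec_mulVec]
    congr 1
    rw [mul_inv_rev, inv_inv, map_mul, Units.val_mul]
  refine ⟨mkMap _ _ u0 hcomm, ?_⟩
  intro a b hab
  have h1 := congrFun (congrArg Subtype.val hab) 1
  have ha : (u0 a).1 1 = a := by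
    show ((ρt (1:Γ)⁻¹ : GL (Fin n) ℂ) : Matrix (Fin n) (Fin n) ℂ).mulVec a = a
    simp [Matrix.one_mulVec]
    exact Matrix.one_mulVec _
  have hb : (u0 b).1 1 = b := by
    show ((ρt (1:Γ)⁻¹ : GL (Fin n) ℂ) : Matrix (Fin n) (Fin n) ℂ).mulVec b = b
    simp [Matrix.one_mulVec]
    exact Matrix.one_mulVec _
  rw [← ha, ← hb]
  exact h1

end RigidAux

-- part 5: Clifford theory
namespace RigidAux

open Module

variable {Γ : Type*} [Group Γ] {n : ℕ} (ρ : Γ →* GL (Fin n) ℂ)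

/-- The action of a group element as a linear endomorphism. -/
noncomputable def act (g : Γ) : (Fin n → ℂ) →ₗ[ℂ] (Fin n → ℂ) :=
  Matrix.toLin' ((ρ g : GL (Fin n) ℂ) : Matrix (Fin n) (Fin n) ℂ)

lemma act_apply (g : Γ) (x : Fin n → ℂ) :
    act ρ g x = ((ρ g : GL (Fin n) ℂ) : Matrix (Fin n) (Fin n) ℂ).mulVec x :=
  Matrix.toLin'_apply _ _

lemma act_act (g₁ g₂ : Γ) (x : Fin n → ℂ) :
    act ρ g₁ (act ρ g₂ x) = act ρ (g₁ * g₂) x := by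
  rw [act_apply, act_apply, act_apply, Matrix.mulVec_mulVec, map_mul, Units.val_mul]

lemma act_one (x : Fin n → ℂ) : act ρ 1 x = x := by
  rw [act_apply, map_one, Units.val_one, Matrix.one_mulVec]

lemma act_inv_act (g : Γ) (x : Fin n → ℂ) : act ρ g (act ρ g⁻¹ x) = x := by
  rw [act_act, mul_inv_cancel, act_one]

lemma matRep_eq_act (K : Subgroup Γ) (k : ↥K) (x : Fin n → ℂ) :
    matRep (ρ.comp K.subtype) k x = act ρ ↑k x := rfl

lemma matRep_self_eq_act (g : Γ) (x : Fin n → ℂ) :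
    matRep ρ g x = act ρ g x := rfl

lemma of_smul_act (K : Subgroup Γ) (k : ↥K)
    (x : (matRep (ρ.comp K.subtype)).asModule) :
    (MonoidAlgebra.of ℂ ↥K k) • x = act ρ ↑k x :=
  of_smul _ k x

lemma sub_apply_mem (K : Subgroup Γ)
    (P : Submodule (MonoidAlgebra ℂ ↥K) (matRep (ρ.comp K.subtype)).asModule)
    (k : ↥K) {x : (matRep (ρ.comp K.subtype)).asModule} (hx : x ∈ P) :
    act ρ ↑k x ∈ P := by
  rw [← of_smul_act]; exact P.smul_mem _ hx

section conj

variable (N : Subgroup Γ) [N.Normal]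

/-- Translate of an `N`-submodule by a group element. -/
noncomputable def cmap (γ : Γ)
    (u : Submodule (MonoidAlgebra ℂ ↥N) (matRep (ρ.comp N.subtype)).asModule) :
    Submodule (MonoidAlgebra ℂ ↥N) (matRep (ρ.comp N.subtype)).asModule :=
  mkSub (matRep (ρ.comp N.subtype))
    (Submodule.map (act ρ γ) (u.restrictScalars ℂ))
    (by
      intro m y hy
      obtain ⟨x, hx, rfl⟩ := hy
      have hconj : γ⁻¹ * ↑m * γ ∈ N := by
        have := Subgroup.Normal.conj_mem ‹N.Normal› ↑m m.2 γ⁻¹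
        simpa [mul_assoc] using this
      refine ⟨act ρ (γ⁻¹ * ↑m * γ) x, ?_, ?_⟩
      · exact sub_apply_mem ρ N u ⟨_, hconj⟩ hx
      · show act ρ γ _ = matRep (ρ.comp N.subtype) m (act ρ γ x)
        rw [matRep_eq_act, act_act, act_act]
        have hγ : γ * (γ⁻¹ * ↑m * γ) = ↑m * γ := by group
        rw [hγ])

lemma mem_cmap {γ : Γ} {u : Submodule (MonoidAlgebra ℂ ↥N) (matRep (ρ.comp N.subtype)).asModule}
    {x : Fin n → ℂ} :
    x ∈ cmap ρ N γ u ↔ ∃ y ∈ u, act ρ γ y = x := by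
  constructor
  · intro hx
    obtain ⟨y, hy, hyx⟩ := hx
    exact ⟨y, hy, hyx⟩
  · intro ⟨y, hy, hyx⟩
    exact ⟨y, hy, hyx⟩

lemma cmap_cmap (γ : Γ) (u : Submodule (MonoidAlgebra ℂ ↥N) (matRep (ρ.comp N.subtype)).asModule) :
    cmap ρ N γ⁻¹ (cmap ρ N γ u) = u := by
  ext x
  refine (mem_cmap ρ N).trans ?_
  constructor
  · rintro ⟨y, hy, rfl⟩
    obtain ⟨z, hz, rfl⟩ := (mem_cmap ρ N).mp hy
    exact (congrArg (fun w => w ∈ u) ((act_act ρ γ⁻¹ γ z).trans ((congrArg (fun g => act ρ g z) (inv_mul_cancel γ)).trans (act_one ρ z)))).mpr hz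
  · intro hx
    refine ⟨act ρ γ x, ?_, ?_⟩
    · exact (mem_cmap ρ N).mpr ⟨x, hx, rfl⟩
    · exact (act_act ρ γ⁻¹ γ x).trans ((congrArg (fun g => act ρ g x) (inv_mul_cancel γ)).trans (act_one ρ x))

lemma cmap_mono (γ : Γ) {u v : Submodule (MonoidAlgebra ℂ ↥N) (matRep (ρ.comp N.subtype)).asModule}
    (huv : u ≤ v) : cmap ρ N γ u ≤ cmap ρ N γ v := by
  intro x hx
  obtain ⟨y, hy, rfl⟩ := (mem_cmap ρ N).mp hx
  exact (mem_cmap ρ N).mpr ⟨y, huv hy, rfl⟩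

/-- Translation as an order isomorphism on `N`-submodules. -/
noncomputable def cmapIso (γ : Γ) :
    Submodule (MonoidAlgebra ℂ ↥N) (matRep (ρ.comp N.subtype)).asModule ≃o
    Submodule (MonoidAlgebra ℂ ↥N) (matRep (ρ.comp N.subtype)).asModule where
  toFun := cmap ρ N γ
  invFun := cmap ρ N γ⁻¹
  left_inv u := cmap_cmap ρ N γ u
  right_inv u := by
    have := cmap_cmap ρ N γ⁻¹ u
    rwa [inv_inv] at this
  map_rel_iff' := by
    intro u v
    simp only [Equiv.coe_fn_mk]
    constructor
    · intro hle
      have := cmap_mono ρ N γ⁻¹ hle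
      rwa [cmap_cmap, cmap_cmap] at this
    · exact cmap_mono ρ N γ

lemma isAtom_orderIso {α β : Type*} [CompleteLattice α] [CompleteLattice β]
    (e : α ≃o β) {a : α} (ha : IsAtom a) : IsAtom (e a) := by
  constructor
  · intro hbot
    apply ha.1
    have : e a = e ⊥ := by rw [hbot, e.map_bot]
    exact e.injective this
  · intro b hb
    have h1 : e.symm b < a := by
      rw [← e.symm_apply_apply a]
      exact e.symm.strictMono hb
    have := ha.2 _ h1
    rw [← e.apply_symm_apply b, this, e.map_bot]

lemma cmap_simple (γ : Γ) (u : Submodule (MonoidAlgebra ℂ ↥N) (matRep (ρ.comp N.subtype)).asModule)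
    (hu : IsSimpleModule (MonoidAlgebra ℂ ↥N) u) :
    IsSimpleModule (MonoidAlgebra ℂ ↥N) (cmap ρ N γ u) := by
  rw [isSimpleModule_iff_isAtom] at hu ⊢
  exact isAtom_orderIso (cmapIso ρ N γ) hu

/-- Clifford's theorem: restriction of a semisimple representation to a normal
subgroup is semisimple. -/
lemma clifford_normal (hss : IsSemisimpleModule (MonoidAlgebra ℂ Γ) (matRep ρ).asModule) :
    IsSemisimpleModule (MonoidAlgebra ℂ ↥N) (matRep (ρ.comp N.subtype)).asModule := by
  haveI : FiniteDimensional ℂ ((matRep (ρ.comp N.subtype)).asModule) :=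
    inferInstanceAs (FiniteDimensional ℂ (Fin n → ℂ))
  apply IsSemisimpleModule.of_sSup_simples_eq_top
  set 𝒮 : Set (Submodule (MonoidAlgebra ℂ ↥N) (matRep (ρ.comp N.subtype)).asModule)
    := {m | IsSimpleModule (MonoidAlgebra ℂ ↥N) m} with h𝒮
  set T := sSup 𝒮 with hT
  -- 𝒮 is stable under translation
  have himage : ∀ γ : Γ, cmap ρ N γ '' 𝒮 = 𝒮 := by
    intro γ
    apply Set.eq_of_subset_of_subset
    · rintro u ⟨v, hv, rfl⟩
      exact cmap_simple ρ N γ v hv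
    · intro u hu
      refine ⟨cmap ρ N γ⁻¹ u, cmap_simple ρ N γ⁻¹ u hu, ?_⟩
      have := cmap_cmap ρ N γ⁻¹ u
      rwa [inv_inv] at this
  have hcmapT : ∀ γ : Γ, cmap ρ N γ T = T := by
    intro γ
    have h1 : cmap ρ N γ T = sSup (cmap ρ N γ '' 𝒮) := by
      have h2 := OrderIso.map_sSup (cmapIso ρ N γ) 𝒮
      rw [hT]
      exact h2.trans (sSup_image (s := 𝒮) (f := cmap ρ N γ)).symm
    rw [h1, himage]
  have hTinv : ∀ (γ : Γ) (x : Fin n → ℂ), x ∈ T → act ρ γ x ∈ T := by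
    intro γ x hx
    have : act ρ γ x ∈ cmap ρ N γ T := by
      rw [mem_cmap]; exact ⟨x, hx, rfl⟩
    rwa [hcmapT] at this
  -- T as a Γ-submodule
  let TΓ : Submodule (MonoidAlgebra ℂ Γ) (matRep ρ).asModule :=
    mkSub (matRep ρ) (T.restrictScalars ℂ) (fun g x hx => hTinv g x hx)
  haveI := hss
  obtain ⟨q, hq⟩ := exists_isCompl TΓ
  let qN : Submodule (MonoidAlgebra ℂ ↥N) (matRep (ρ.comp N.subtype)).asModule :=
    mkSub (matRep (ρ.comp N.subtype)) (q.restrictScalars ℂ)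
      (fun m x hx => by
        have : matRep ρ ↑m x ∈ q := apply_mem (matRep ρ) q ↑m hx
        exact this)
  rcases eq_or_ne qN ⊥ with hqN | hqN
  · have hq' : q = ⊥ := by
      rw [Submodule.eq_bot_iff]
      intro x hx
      have : x ∈ qN := hx
      rw [hqN] at this
      exact (Submodule.mem_bot (M := (matRep (ρ.comp N.subtype)).asModule) (MonoidAlgebra ℂ ↥N)).mp this
    have hTΓ : TΓ = ⊤ := by
      have := hq.codisjoint
      rw [codisjoint_iff] at this
      rw [hq'] at this
      rwa [sup_bot_eq] at this
    rw [Submodule.eq_top_iff']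
    intro x
    have : x ∈ TΓ := by rw [hTΓ]; trivial
    exact this
  · exfalso
    obtain ⟨s, hs_le, hs_simple⟩ := exists_simple_le qN hqN
    have hs_bot : s ≠ ⊥ := (isSimpleModule_iff_isAtom.mp hs_simple).1
    apply hs_bot
    rw [Submodule.eq_bot_iff]
    intro x hx
    have hsT : s ≤ T := le_sSup (show s ∈ 𝒮 from hs_simple)
    have hxT : x ∈ TΓ := hsT hx
    have hxq : x ∈ q := hs_le hx
    have := hq.disjoint
    rw [disjoint_iff] at this
    have hx0 : x ∈ TΓ ⊓ q := ⟨hxT, hxq⟩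
    rw [this] at hx0
    exact (Submodule.mem_bot (M := (matRep ρ).asModule) (MonoidAlgebra ℂ Γ)).mp hx0

end conj

end RigidAux

-- part 6: relative Maschke
namespace RigidAux

open Module

variable {Γ : Type*} [Group Γ] {n : ℕ} (ρ : Γ →* GL (Fin n) ℂ)

lemma maschke_rel (N H : Subgroup Γ) (hNH : N ≤ H) [N.FiniteIndex]
    (hN : IsSemisimpleModule (MonoidAlgebra ℂ ↥N) (matRep (ρ.comp N.subtype)).asModule) :
    IsSemisimpleModule (MonoidAlgebra ℂ ↥H) (matRep (ρ.comp H.subtype)).asModule := by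
  classical
  refine (isSemisimpleModule_iff _ _).mpr ⟨?_⟩
  intro U
  -- U restricted to an N-submodule
  let UN : Submodule (MonoidAlgebra ℂ ↥N) (matRep (ρ.comp N.subtype)).asModule :=
    mkSub (matRep (ρ.comp N.subtype)) (U.restrictScalars ℂ)
      (fun m x hx => by
        have : act ρ ↑m x ∈ U := sub_apply_mem ρ H U ⟨↑m, hNH m.2⟩ hx
        exact this)
  haveI := hN
  obtain ⟨Wc, hWc⟩ := exists_isCompl UN
  let π0 := UN.linearProjOfIsCompl Wc hWc
  let πV : (matRep (ρ.comp N.subtype)).asModule →ₗ[MonoidAlgebra ℂ ↥N]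
      (matRep (ρ.comp N.subtype)).asModule := UN.subtype.comp π0
  have hπ_mem : ∀ x, πV x ∈ U := fun x => (π0 x).2
  have hπ_fix : ∀ x ∈ U, πV x = x := by
    intro x hx
    have h1 : π0 x = ⟨x, hx⟩ := Submodule.linearProjOfIsCompl_apply_left hWc ⟨x, hx⟩
    show (↑(π0 x) : (matRep (ρ.comp N.subtype)).asModule) = x
    rw [h1]
  have hπ_comm : ∀ (m : ↥N) (x : Fin n → ℂ), πV (act ρ ↑m x) = act ρ ↑m (πV x) := by
    intro m x
    have h1 := πV.map_smul (MonoidAlgebra.of ℂ ↥N m) x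
    exact (congrArg πV (of_smul_act ρ N m x).symm).trans (h1.trans (of_smul_act ρ N m (πV x)))
  -- the ℂ-linear projection
  let πC : (Fin n → ℂ) →ₗ[ℂ] (Fin n → ℂ) :=
    ((πV.restrictScalars ℂ : (matRep (ρ.comp N.subtype)).asModule →ₗ[ℂ]
      (matRep (ρ.comp N.subtype)).asModule) : (Fin n → ℂ) →ₗ[ℂ] (Fin n → ℂ))
  have hπC : ∀ x, πC x = πV x := fun _ => rfl
  -- the averaging
  let Q := H ⧸ N.subgroupOf H
  haveI : Finite Q := inferInstance
  haveI := Fintype.ofFinite Q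
  let F : ↥H → ((Fin n → ℂ) →ₗ[ℂ] (Fin n → ℂ)) := fun h =>
    (act ρ ↑h).comp (πC.comp (act ρ (↑h)⁻¹))
  have hF_apply : ∀ (h : ↥H) (x : Fin n → ℂ), F h x = act ρ ↑h (πC (act ρ (↑h)⁻¹ x)) :=
    fun _ _ => rfl
  have hF_coset : ∀ (a b : ↥H), a⁻¹ * b ∈ N.subgroupOf H → F a = F b := by
    intro a b hab
    have hmem : ((a⁻¹ * b : ↥H) : Γ) ∈ N := hab
    apply LinearMap.ext
    intro x
    rw [hF_apply, hF_apply]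
    have hb : (b : Γ) = ↑a * ↑(a⁻¹ * b) := by
      push_cast
      group
    rw [hb]
    have h1 : act ρ (↑a * ↑(a⁻¹ * b)) = (act ρ ↑a).comp (act ρ ↑(a⁻¹ * b)) := by
      apply LinearMap.ext; intro y
      rw [LinearMap.comp_apply, act_act]
    have h2 : act ρ (↑a * ↑(a⁻¹ * b) : Γ)⁻¹ = (act ρ (↑(a⁻¹ * b) : Γ)⁻¹).comp (act ρ (↑a)⁻¹) := by
      apply LinearMap.ext; intro y
      rw [LinearMap.comp_apply, act_act, mul_inv_rev]
    rw [h1, h2]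
    simp only [LinearMap.comp_apply]
    congr 1
    have hc : ∀ y, πC (act ρ (↑(a⁻¹ * b) : Γ)⁻¹ y) = act ρ (↑(a⁻¹ * b) : Γ)⁻¹ (πC y) := by
      intro y
      have := hπ_comm ⟨(↑(a⁻¹ * b) : Γ)⁻¹, by
        have := Subgroup.inv_mem N hmem
        simpa using this⟩ y
      exact this
    rw [hc, act_act]
    have : (↑(a⁻¹ * b) : Γ) * (↑(a⁻¹ * b) : Γ)⁻¹ = 1 := mul_inv_cancel _
    rw [this, act_one]
  let s : Q → ((Fin n → ℂ) →ₗ[ℂ] (Fin n → ℂ)) := fun q =>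
    Quotient.liftOn' q F (by
      intro a b hab
      exact hF_coset a b (QuotientGroup.leftRel_apply.mp hab))
  have hs_mk : ∀ h : ↥H, s (QuotientGroup.mk h) = F h := fun _ => rfl
  have hs_act : ∀ (h₀ : ↥H) (q : Q),
      s (h₀ • q) = ((act ρ ↑h₀).comp (s q)).comp (act ρ (↑h₀)⁻¹) := by
    intro h₀ q
    induction q using Quotient.inductionOn' with
    | h h =>
      have hmk : (Quotient.mk'' h : Q) = QuotientGroup.mk h := rfl
      have hsmul : h₀ • (QuotientGroup.mk h : Q) = QuotientGroup.mk (h₀ * h) := rfl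
      rw [hmk, hsmul, hs_mk, hs_mk]
      apply LinearMap.ext
      intro x
      rw [hF_apply]
      simp only [LinearMap.comp_apply]
      rw [hF_apply]
      have e1 : (↑(h₀ * h) : Γ) = ↑h₀ * ↑h := rfl
      rw [e1]
      have e2 : act ρ (↑h₀ * ↑h) (πC (act ρ (↑h₀ * ↑h : Γ)⁻¹ x))
          = act ρ ↑h₀ (act ρ ↑h (πC (act ρ (↑h)⁻¹ (act ρ (↑h₀)⁻¹ x)))) := by
        rw [act_act, act_act, mul_inv_rev]
      rw [e2]
  let card : ℂ := (Nat.card Q : ℂ)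
  have hcard : card ≠ 0 := by
    have h1 : Nat.card Q ≠ 0 := Nat.card_ne_zero.mpr ⟨⟨QuotientGroup.mk 1⟩, inferInstance⟩
    simp only [card]
    exact_mod_cast h1
  let π' : (Fin n → ℂ) →ₗ[ℂ] (Fin n → ℂ) := card⁻¹ • ∑ q : Q, s q
  have hπ'_apply : ∀ x, π' x = card⁻¹ • ∑ q : Q, s q x := by
    intro x
    simp [π', LinearMap.sum_apply]
  -- values in U
  have hsqU : ∀ (q : Q) (x : Fin n → ℂ), s q x ∈ U := by
    intro q x
    induction q using Quotient.inductionOn' with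
    | h h =>
      have : s (Quotient.mk'' h) x = F h x := rfl
      rw [this, hF_apply]
      have h1 : πC (act ρ (↑h)⁻¹ x) ∈ U := hπ_mem _
      exact sub_apply_mem ρ H U h h1
  have hπ'U : ∀ x, π' x ∈ U := by
    intro x
    rw [hπ'_apply]
    refine (U.restrictScalars ℂ).smul_mem _ ?_
    exact Submodule.sum_mem _ (fun q _ => hsqU q x)
  -- fixes U
  have hπ'_fix : ∀ x ∈ U, π' x = x := by
    intro (x : Fin n → ℂ) hx
    have hsq : ∀ q : Q, s q x = x := by
      intro q
      induction q using Quotient.inductionOn' with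
      | h h =>
        have h0 : s (Quotient.mk'' h) x = F h x := rfl
        rw [h0, hF_apply]
        have h1 : act ρ (↑h)⁻¹ x ∈ U := by
          have := sub_apply_mem ρ H U h⁻¹ hx
          rwa [show ((h⁻¹ : ↥H) : Γ) = (↑h)⁻¹ from rfl] at this
        rw [hπC, hπ_fix _ h1, act_inv_act]
    rw [hπ'_apply]
    have : ∑ q : Q, s q x = (Fintype.card Q) • x := by
      rw [Finset.sum_congr rfl (fun q _ => hsq q)]
      rw [Finset.sum_const, Finset.card_univ]
    rw [this]
    have hnat : (Fintype.card Q) • x = (Fintype.card Q : ℂ) • x :=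
      (Nat.cast_smul_eq_nsmul ℂ _ x).symm
    rw [hnat, smul_smul]
    have hcards : card = (Fintype.card Q : ℂ) := by
      simp [card, Nat.card_eq_fintype_card]
    rw [← hcards, inv_mul_cancel₀ hcard, one_smul]
  -- equivariance
  have hπ'_comm : ∀ (h₀ : ↥H) (x : Fin n → ℂ), π' (act ρ ↑h₀ x) = act ρ ↑h₀ (π' x) := by
    intro h₀ x
    rw [hπ'_apply, hπ'_apply]
    rw [map_smul]
    congr 1
    have h1 : ∑ q : Q, s (h₀ • q) (act ρ ↑h₀ x) = ∑ q : Q, s q (act ρ ↑h₀ x) := by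
      apply Fintype.sum_equiv (MulAction.toPerm h₀)
      intro q
      rfl
    rw [← h1]
    rw [map_sum]
    apply Finset.sum_congr rfl
    intro q _
    rw [hs_act]
    simp only [LinearMap.comp_apply]
    congr 1
    congr 1
    rw [act_act]
    have : (↑h₀ : Γ)⁻¹ * ↑h₀ = 1 := inv_mul_cancel _
    rw [this, act_one]
  -- the complement
  let K : Submodule (MonoidAlgebra ℂ ↥H) (matRep (ρ.comp H.subtype)).asModule :=
    mkSub (matRep (ρ.comp H.subtype)) (LinearMap.ker π')
      (fun h x hx => by
        have hx0 : π' x = 0 := hx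
        show π' (act ρ ↑h x) = 0
        rw [hπ'_comm, hx0, map_zero])
  refine ⟨K, ?_, ?_⟩
  · -- disjoint
    rw [disjoint_iff]
    rw [Submodule.eq_bot_iff]
    intro x hx
    obtain ⟨hxU, hxK⟩ := hx
    have h0 : π' x = 0 := hxK
    have h1 : π' x = x := hπ'_fix x hxU
    rw [h1] at h0
    exact h0
  · -- codisjoint
    rw [codisjoint_iff]
    rw [Submodule.eq_top_iff']
    intro x
    rw [Submodule.mem_sup]
    obtain ⟨y, hyx⟩ : ∃ y : Fin n → ℂ, y = x := ⟨x, rfl⟩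
    refine ⟨π' y, hπ'U y, y - π' y, ?_, ?_⟩
    · show π' (y - π' y) = 0
      rw [map_sub]
      have : π' (π' y) = π' y := hπ'_fix _ (hπ'U y)
      rw [this, sub_self]
    · show π' y + (y - π' y) = x
      rw [← hyx]
      abel

/-- Clifford: restriction to a finite-index subgroup preserves semisimplicity. -/
lemma clifford (H : Subgroup Γ) [H.FiniteIndex]
    (hss : IsSemisimpleModule (MonoidAlgebra ℂ Γ) (matRep ρ).asModule) :
    IsSemisimpleModule (MonoidAlgebra ℂ ↥H) (matRep (ρ.comp H.subtype)).asModule := by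
  have hN := clifford_normal ρ H.normalCore hss
  exact maschke_rel ρ H.normalCore H H.normalCore_le hN

end RigidAux

-- part 7: finiteness of isomorphism classes of semisimple submodule classes
namespace RigidAux

open Module

universe u v

variable {Γ : Type u} [Group Γ]

lemma finite_classes (d : ℕ) :
    ∀ (C : Type v) [AddCommGroup C] [Module ℂ C] [Module (MonoidAlgebra ℂ Γ) C]
      [IsScalarTower ℂ (MonoidAlgebra ℂ Γ) C] [FiniteDimensional ℂ C],
      finrank ℂ C = d →
      ∃ L : List (Σ m : ℕ, Γ →* GL (Fin m) ℂ),
        ∀ (m : ℕ) (ρ : Γ →* GL (Fin m) ℂ),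
          IsSemisimpleModule (MonoidAlgebra ℂ Γ) (matRep ρ).asModule →
          (∃ ι : (matRep ρ).asModule →ₗ[MonoidAlgebra ℂ Γ] C, Function.Injective ι) →
          ∃ p ∈ L, Nonempty ((matRep ρ).asModule ≃ₗ[MonoidAlgebra ℂ Γ] (matRep p.2).asModule) := by
  induction d using Nat.strong_induction_on with
  | _ d IH =>
  intro C _ _ _ _ _ hd
  rcases Nat.eq_zero_or_pos d with hd0 | hdpos
  · -- zero-dimensional case
    subst hd0
    haveI hCsub : Subsingleton C := finrank_zero_iff.mp hd
    refine ⟨[⟨0, 1⟩], ?_⟩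
    intro m ρ _ ⟨ι, hι⟩
    haveI hsub : Subsingleton ((matRep ρ).asModule) := ⟨fun a b => hι (Subsingleton.elim _ _)⟩
    refine ⟨⟨0, 1⟩, List.mem_singleton_self _, ⟨?_⟩⟩
    haveI : Subsingleton ((matRep (1 : Γ →* GL (Fin 0) ℂ)).asModule) :=
      inferInstanceAs (Subsingleton (Fin 0 → ℂ))
    exact LinearEquiv.ofSubsingleton _ _
  · -- positive-dimensional case
    haveI : Nontrivial C := by
      apply Module.nontrivial_of_finrank_pos (R := ℂ)
      omega
    have htop : (⊤ : Submodule (MonoidAlgebra ℂ Γ) C) ≠ ⊥ := by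
      intro h
      obtain ⟨x, y, hxy⟩ := exists_pair_ne C
      apply hxy
      have hx : x ∈ (⊥ : Submodule (MonoidAlgebra ℂ Γ) C) := h ▸ Submodule.mem_top
      have hy : y ∈ (⊥ : Submodule (MonoidAlgebra ℂ Γ) C) := h ▸ Submodule.mem_top
      rw [Submodule.mem_bot] at hx hy
      rw [hx, hy]
    obtain ⟨S₀, -, hS₀simple⟩ := exists_simple_le (⊤ : Submodule (MonoidAlgebra ℂ Γ) C) htop
    have hS₀bot : S₀ ≠ ⊥ := (isSimpleModule_iff_isAtom.mp hS₀simple).1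
    -- the quotient
    let Cq := C ⧸ S₀
    haveI : FiniteDimensional ℂ Cq :=
      Module.Finite.of_surjective ((S₀.mkQ).restrictScalars ℂ) (Submodule.mkQ_surjective S₀)
    -- rank computation
    have hker : LinearMap.ker ((S₀.mkQ).restrictScalars ℂ) = S₀.restrictScalars ℂ := by
      ext x
      simp only [LinearMap.mem_ker, LinearMap.restrictScalars_apply, Submodule.restrictScalars_mem]
      exact Submodule.Quotient.mk_eq_zero S₀
    have hrange : LinearMap.range ((S₀.mkQ).restrictScalars ℂ) = ⊤ := by
      rw [LinearMap.range_eq_top]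
      exact Submodule.mkQ_surjective S₀
    have hrank := LinearMap.finrank_range_add_finrank_ker ((S₀.mkQ).restrictScalars ℂ)
    rw [hker, hrange, finrank_top, hd] at hrank
    have hS₀pos : 0 < finrank ℂ (S₀.restrictScalars ℂ) := by
      obtain ⟨x, hxS, hx0⟩ := (Submodule.ne_bot_iff S₀).mp hS₀bot
      apply Module.finrank_pos_iff.mpr
      exact ⟨⟨⟨x, hxS⟩, 0, by simp [Subtype.ext_iff, hx0]⟩⟩
    have hlt : finrank ℂ Cq < d := by
      show finrank ℂ (C ⧸ S₀) < d
      omega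
    obtain ⟨L', hL'⟩ := IH (finrank ℂ Cq) hlt Cq rfl
    -- instance bookkeeping for S₀
    haveI : FiniteDimensional ℂ ↥S₀ :=
      FiniteDimensional.of_injective ((S₀.subtype).restrictScalars ℂ) (Submodule.injective_subtype S₀)
    -- chosen representatives for S₀ × (module of p)
    have hrep : ∀ p : (Σ m : ℕ, Γ →* GL (Fin m) ℂ),
        ∃ ρ' : Γ →* GL (Fin (finrank ℂ (↥S₀ × (matRep p.2).asModule))) ℂ,
          Nonempty ((matRep ρ').asModule ≃ₗ[MonoidAlgebra ℂ Γ]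
            (↥S₀ × (matRep p.2).asModule)) := by
      intro p
      haveI : FiniteDimensional ℂ ((matRep p.2).asModule) :=
        inferInstanceAs (FiniteDimensional ℂ (Fin p.1 → ℂ))
      exact exists_rep _ rfl
    let fP : (Σ m : ℕ, Γ →* GL (Fin m) ℂ) → (Σ m : ℕ, Γ →* GL (Fin m) ℂ) :=
      fun p => ⟨_, Classical.choose (hrep p)⟩
    refine ⟨L' ++ L'.map fP, ?_⟩
    intro m ρ hss ⟨ι, hι⟩
    haveI := hss
    haveI : FiniteDimensional ℂ ((matRep ρ).asModule) :=
      inferInstanceAs (FiniteDimensional ℂ (Fin m → ℂ))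
    let φ : (matRep ρ).asModule →ₗ[MonoidAlgebra ℂ Γ] Cq := (S₀.mkQ).comp ι
    rcases eq_or_ne (LinearMap.ker φ) ⊥ with hKbot | hKbot
    · -- φ injective: use IH directly
      obtain ⟨p, hp, hiso⟩ := hL' m ρ hss ⟨φ, LinearMap.ker_eq_bot.mp hKbot⟩
      exact ⟨p, List.mem_append_left _ hp, hiso⟩
    · -- the kernel is isomorphic to S₀
      obtain ⟨K', hK'⟩ := exists_isCompl (LinearMap.ker φ)
      let e1 : (matRep ρ).asModule ≃ₗ[MonoidAlgebra ℂ Γ] ↥(LinearMap.ker φ) × ↥K' :=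
        (Submodule.prodEquivOfIsCompl _ _ hK').symm
      have hsub : ∀ x : ↥(LinearMap.ker φ), ι ↑x ∈ S₀ := by
        intro x
        have hx : φ ↑x = 0 := x.2
        have : S₀.mkQ (ι ↑x) = 0 := hx
        exact (Submodule.Quotient.mk_eq_zero S₀).mp this
      let ψ : ↥(LinearMap.ker φ) →ₗ[MonoidAlgebra ℂ Γ] ↥S₀ :=
        LinearMap.codRestrict S₀ (ι.comp (LinearMap.ker φ).subtype) hsub
      have hψinj : Function.Injective ψ := by
        intro a b hab
        apply Subtype.ext
        apply hι
        have := congrArg Subtype.val hab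
        exact this
      have hψsurj : Function.Surjective ψ := by
        rw [← LinearMap.range_eq_top]
        rcases eq_bot_or_eq_top (LinearMap.range ψ) with hr | hr
        · exfalso
          obtain ⟨x, hxK, hx0⟩ := (Submodule.ne_bot_iff _).mp hKbot
          have : ψ ⟨x, hxK⟩ ∈ LinearMap.range ψ := ⟨_, rfl⟩
          rw [hr] at this
          rw [Submodule.mem_bot] at this
          apply hx0
          have : ι x = 0 := by
            have h2 := congrArg Subtype.val this
            exact h2
          have h3 : ι x = ι 0 := by rw [this, map_zero]
          exact hι h3
        · exact hr
      let eK : ↥(LinearMap.ker φ) ≃ₗ[MonoidAlgebra ℂ Γ] ↥S₀ :=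
        LinearEquiv.ofBijective ψ ⟨hψinj, hψsurj⟩
      -- K' embeds into the quotient
      let φ' : ↥K' →ₗ[MonoidAlgebra ℂ Γ] Cq := φ.comp (K'.subtype)
      have hφ'inj : Function.Injective φ' := by
        intro a b hab
        have hmem : ((a : (matRep ρ).asModule) - ↑b) ∈ LinearMap.ker φ := by
          rw [LinearMap.mem_ker, map_sub, sub_eq_zero]
          exact hab
        have hmem2 : ((a : (matRep ρ).asModule) - ↑b) ∈ K' := K'.sub_mem a.2 b.2
        have hboth : ((a : (matRep ρ).asModule) - ↑b) ∈ LinearMap.ker φ ⊓ K' :=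
          ⟨hmem, hmem2⟩
        have h0 := hK'.disjoint
        rw [disjoint_iff] at h0
        rw [h0, Submodule.mem_bot] at hboth
        exact Subtype.ext (sub_eq_zero.mp hboth)
      -- instances for K'
      haveI : FiniteDimensional ℂ ↥K' :=
        FiniteDimensional.of_injective ((K'.subtype).restrictScalars ℂ) (Submodule.injective_subtype K')
      obtain ⟨τ, ⟨e2⟩⟩ := exists_rep (G := Γ) ↥K' rfl
      haveI hK'ss : IsSemisimpleModule (MonoidAlgebra ℂ Γ) ↥K' := inferInstance
      have hτss : IsSemisimpleModule (MonoidAlgebra ℂ Γ) ((matRep τ).asModule) :=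
        IsSemisimpleModule.congr (M := ↥K') e2
      obtain ⟨p, hp, ⟨e3⟩⟩ := hL' _ τ hτss ⟨φ'.comp e2.toLinearMap, hφ'inj.comp e2.injective⟩
      -- assemble the final isomorphism
      let e4 : ↥K' ≃ₗ[MonoidAlgebra ℂ Γ] (matRep p.2).asModule := e2.symm.trans e3
      let e5 : (matRep ρ).asModule ≃ₗ[MonoidAlgebra ℂ Γ] (↥S₀ × (matRep p.2).asModule) :=
        e1.trans (eK.prodCongr e4)
      obtain ⟨e6⟩ := Classical.choose_spec (hrep p)
      refine ⟨fP p, List.mem_append_right _ (List.mem_map_of_mem (f := fP) hp), ⟨e5.trans e6.symm⟩⟩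

end RigidAux

/-!
STATEMENT 15:
Let `Γ` be a finitely generated group containing a finite-index subgroup `Γ'`
such that every representation `Γ' → GL(r, ℂ)` is rigid.  Then every
representation `Γ → GL(r, ℂ)` is rigid.
-/
open RigidAux Module

theorem rigid_of_finite_index_rigid
    {Γ : Type*} [Group Γ] [Group.FG Γ] (Γ' : Subgroup Γ) [Γ'.FiniteIndex]
    (r : ℕ) (h : Rigid Γ' r) :
    Rigid Γ r := by
  show ∃ l : List (Γ →* GL (Fin r) ℂ),
    ∀ ρ : Γ →* GL (Fin r) ℂ, IsSemisimpleRep ρ → ∃ ρ' ∈ l, RepIso ρ ρ'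

  classical
  obtain ⟨l, hl⟩ := h
  -- for each list entry, the coinduced module and its list of classes
  have hC : ∀ σ : ↥Γ' →* GL (Fin r) ℂ,
      ∃ L : List (Σ m : ℕ, Γ →* GL (Fin m) ℂ),
        ∀ (m : ℕ) (ρ : Γ →* GL (Fin m) ℂ),
          IsSemisimpleModule (MonoidAlgebra ℂ Γ) (matRep ρ).asModule →
          (∃ ι : (matRep ρ).asModule →ₗ[MonoidAlgebra ℂ Γ] (coindRep Γ' σ).asModule,
            Function.Injective ι) →
          ∃ p ∈ L, Nonempty ((matRep ρ).asModule ≃ₗ[MonoidAlgebra ℂ Γ]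
            (matRep p.2).asModule) := by
    intro σ
    haveI h1 : FiniteDimensional ℂ ↥(coindCarrier Γ' σ) := coind_finiteDimensional Γ' σ
    haveI h2 : FiniteDimensional ℂ ((coindRep Γ' σ).asModule) := h1
    exact finite_classes (finrank ℂ ((coindRep Γ' σ).asModule)) ((coindRep Γ' σ).asModule) rfl
  let bigL : List (Σ m : ℕ, Γ →* GL (Fin m) ℂ) :=
    l.flatMap (fun σ => Classical.choose (hC σ))
  -- conversion of entries of dimension r
  have hconv : ∀ p : (Σ m : ℕ, Γ →* GL (Fin m) ℂ), p.1 = r →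
      ∃ ρs : Γ →* GL (Fin r) ℂ,
        Nonempty ((matRep ρs).asModule ≃ₗ[MonoidAlgebra ℂ Γ] (matRep p.2).asModule) := by
    intro p hp
    haveI : FiniteDimensional ℂ ((matRep p.2).asModule) :=
      inferInstanceAs (FiniteDimensional ℂ (Fin p.1 → ℂ))
    apply exists_rep
    show finrank ℂ ((matRep p.2).asModule) = r
    have h1 : finrank ℂ ((matRep p.2).asModule) = p.1 := finrank_fin_fun ℂ
    rw [h1, hp]
  let conv : (Σ m : ℕ, Γ →* GL (Fin m) ℂ) → Option (Γ →* GL (Fin r) ℂ) := fun p =>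
    if hp : p.1 = r then some (Classical.choose (hconv p hp)) else none
  refine ⟨bigL.filterMap conv, ?_⟩
  intro ρ hρss
  haveI hssmod : IsSemisimpleModule (MonoidAlgebra ℂ Γ) ((matRep ρ).asModule) := hρss
  -- restriction is semisimple (Clifford)
  have hres : IsSemisimpleModule (MonoidAlgebra ℂ ↥Γ')
      ((matRep (ρ.comp Γ'.subtype)).asModule) := clifford ρ Γ' hρss
  obtain ⟨σ, hσl, hRI⟩ := hl (ρ.comp Γ'.subtype) hres
  obtain ⟨M, hM⟩ := hRI
  -- conjugate ρ so that its restriction is exactly σ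
  let ρt : Γ →* GL (Fin r) ℂ :=
    { toFun := fun g => M * ρ g * M⁻¹
      map_one' := by simp
      map_mul' := fun g₁ g₂ => by
        simp only [map_mul]
        group }
  have hRIt : ∀ g : Γ, ρt g = M * ρ g * M⁻¹ := fun g => rfl
  have hrest : ∀ h' : ↥Γ', ρt ↑h' = σ h' := by
    intro h'
    have := hM h'
    exact this.symm
  obtain ⟨et⟩ := equiv_of_repIso M hRIt
  have hρtss : IsSemisimpleModule (MonoidAlgebra ℂ Γ) ((matRep ρt).asModule) :=
    IsSemisimpleModule.congr et.symm
  -- embed into the coinduced module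
  obtain ⟨u, hu⟩ := exists_unit (H := Γ') (σ := σ) ρt hrest
  obtain ⟨p, hpL, ⟨e⟩⟩ := Classical.choose_spec (hC σ) r ρt hρtss ⟨u, hu⟩
  -- p has dimension r
  have hp1 : p.1 = r := by
    have h1 : finrank ℂ ((matRep ρt).asModule) = r := finrank_fin_fun ℂ
    have h2 : finrank ℂ ((matRep p.2).asModule) = p.1 := finrank_fin_fun ℂ
    have h3 := LinearEquiv.finrank_eq (e.restrictScalars ℂ)
    omega
  obtain ⟨e'⟩ := Classical.choose_spec (hconv p hp1)
  refine ⟨Classical.choose (hconv p hp1), ?_, ?_⟩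
  · apply List.mem_filterMap.mpr
    refine ⟨p, ?_, ?_⟩
    · exact List.mem_flatMap.mpr ⟨σ, hσl, hpL⟩
    · show (if hp : p.1 = r then some (Classical.choose (hconv p hp)) else none) = _
      rw [dif_pos hp1]
  · exact repIso_of_equiv (et.trans (e.trans e'.symm))
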